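/- Let g : ℝ → ℝ be defined by g(x) = 4·(1 - 3x/(2π))/(1 + 3·cos x). Then for every x with 0 ≤ x < π/2, the derivative of g at x satisfies |g'(x)| ≤ 50. -/
import Mathlib


open Real

/-- `g(x) = 4·(1 - 3x/(2π))/(1 + 3·cos x)`. -/
noncomputable def g (x : ℝ) : ℝ :=
  4 * (1 - 3 * x / (2 * Real.pi)) / (1 + 3 * Real.cos x)

/-- For `0 ≤ x < π/2`, `|g'(x)| ≤ 50`. -/
theorem stmt19 (x : ℝ) (h0 : 0 ≤ x) (h1 : x < Real.pi / 2) : |deriv g x| ≤ 50 := by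
  have hpi : (0:ℝ) < Real.pi := Real.pi_pos
  have hc : 0 < Real.cos x := Real.cos_pos_of_mem_Ioo ⟨by linarith, h1⟩
  have hc1 : Real.cos x ≤ 1 := Real.cos_le_one x
  have hs0 : 0 ≤ Real.sin x := Real.sin_nonneg_of_nonneg_of_le_pi h0 (by linarith)
  have hs1 : Real.sin x ≤ 1 := Real.sin_le_one x
  have hd : (1 + 3 * Real.cos x) ≠ 0 := by positivity
  have hnum : HasDerivAt (fun x : ℝ => 4 * (1 - 3 * x / (2 * Real.pi)))
      (4 * (-(3 / (2 * Real.pi)))) x := by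
    have : HasDerivAt (fun x : ℝ => 1 - 3 * x / (2 * Real.pi))
        (-(3 / (2 * Real.pi))) x := by
      simpa using ((hasDerivAt_id x).const_mul (3:ℝ)).div_const (2 * Real.pi) |>.const_sub 1
    simpa using this.const_mul (4:ℝ)
  have hden : HasDerivAt (fun x : ℝ => 1 + 3 * Real.cos x) (3 * (-Real.sin x)) x := by
    simpa using ((Real.hasDerivAt_cos x).const_mul (3:ℝ)).const_add 1
  have H : HasDerivAt g
      ((4 * (-(3 / (2 * Real.pi))) * (1 + 3 * Real.cos x)
        - 4 * (1 - 3 * x / (2 * Real.pi)) * (3 * (-Real.sin x))) / (1 + 3 * Real.cos x) ^ 2) x :=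
    hnum.div hden hd
  rw [H.deriv, abs_div]
  have hden1 : (1:ℝ) ≤ |(1 + 3 * Real.cos x) ^ 2| := by
    rw [abs_of_pos (by positivity)]; nlinarith
  have h6 : 6 / Real.pi ≤ 2 := by
    rw [div_le_iff₀ hpi]; nlinarith [Real.pi_gt_three]
  have hx1 : 3 * x / (2 * Real.pi) ≤ 3 / 4 := by
    rw [div_le_iff₀ (by positivity)]; nlinarith
  have hx0 : 0 ≤ 3 * x / (2 * Real.pi) := by positivity
  have hkey : 4 * (-(3 / (2 * Real.pi))) = -(6 / Real.pi) := by
    field_simp; ring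
  have hnumb : |4 * (-(3 / (2 * Real.pi))) * (1 + 3 * Real.cos x)
      - 4 * (1 - 3 * x / (2 * Real.pi)) * (3 * (-Real.sin x))| ≤ 50 := by
    rw [hkey, abs_le]
    have h60 : (0:ℝ) ≤ 6 / Real.pi := by positivity
    have h1u : (0:ℝ) ≤ 1 - 3 * x / (2 * Real.pi) := by linarith
    constructor <;> nlinarith [mul_nonneg hs0 h1u, mul_nonneg h60 hc.le,
      mul_le_mul h6 hc1 hc.le (by norm_num : (0:ℝ) ≤ 2),
      mul_le_one₀ hs1 h1u (by linarith : 1 - 3 * x / (2 * Real.pi) ≤ 1)]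
  calc |4 * (-(3 / (2 * Real.pi))) * (1 + 3 * Real.cos x)
      - 4 * (1 - 3 * x / (2 * Real.pi)) * (3 * (-Real.sin x))| / |(1 + 3 * Real.cos x) ^ 2|
      ≤ |4 * (-(3 / (2 * Real.pi))) * (1 + 3 * Real.cos x)
      - 4 * (1 - 3 * x / (2 * Real.pi)) * (3 * (-Real.sin x))| :=
        div_le_self (abs_nonneg _) hden1
    _ ≤ 50 := hnumb
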